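/- (Decoupling of S[U;δ] to the δ-RPDE.) Fix integers n, m and δ ∈ ℝ. Let U be a four times continuously differentiable real function and u1, u2 twice continuously differentiable real functions on an open set D ⊆ ℝ² where α ≠ β, ∂U/∂α ≠ 0 and ∂U/∂β ≠ 0, and suppose (U, u1, u2) satisfies the system S[U;δ] on D. Then on D: (i) u1 − u2 = (1/2)·((α−β)·U_{αβ}/(U_α·U_β) + m/U_β − n/U_α); and (ii) U satisfies the δ-RPDE: R(α,β,U;n,m) + 2δ²·U_α·U_β·(2·U_{αβ} − (U_α − U_β)/(α−β)) = 0. -/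

import Mathlib

/-- Partial derivative with respect to the first variable. -/
noncomputable def pda (f : ℝ × ℝ → ℝ) (p : ℝ × ℝ) : ℝ :=
  deriv (fun x => f (x, p.2)) p.1

/-- Partial derivative with respect to the second variable. -/
noncomputable def pdb (f : ℝ × ℝ → ℝ) (p : ℝ × ℝ) : ℝ :=
  deriv (fun y => f (p.1, y)) p.2

/-- The RPDE expression R(α,β,U;n,m). -/
noncomputable def Rexpr (n m : ℤ) (U : ℝ × ℝ → ℝ) (p : ℝ × ℝ) : ℝ :=
  let s := p.1 - p.2
  let Ua := pda U p
  let Ub := pdb U p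
  let Uaa := pda (pda U) p
  let Uab := pdb (pda U) p
  let Ubb := pdb (pdb U) p
  let Uaab := pdb (pda (pda U)) p
  let Uabb := pdb (pdb (pda U)) p
  let Uaabb := pdb (pdb (pda (pda U))) p ;
  (-Uaabb
    + Uaab * (1 / s + Ubb / Ub + Uab / Ua)
    + Uabb * (1 / (-s) + Uaa / Ua + Uab / Ub)
    - Uaa * Ubb * Uab / (Ua * Ub)
    + Uaa * ((n : ℝ) ^ 2 * Ub ^ 2 / (s ^ 2 * Ua ^ 2) - Uab / (s * Ua) - Uab ^ 2 / Ua ^ 2)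
    + Ubb * ((m : ℝ) ^ 2 * Ua ^ 2 / (s ^ 2 * Ub ^ 2) + Uab / (s * Ub) - Uab ^ 2 / Ub ^ 2)
    + ((n : ℝ) ^ 2 / (2 * s ^ 3)) * (Ub / Ua) * (Ua + Ub + 2 * (-s) * Uab)
    - ((m : ℝ) ^ 2 / (2 * s ^ 3)) * (Ua / Ub) * (Ua + Ub + 2 * s * Uab)
    + (1 / (2 * s)) * Uab ^ 2 * (1 / Ua - 1 / Ub))

/-- The system S[U;δ]. -/
def SUdelta (n m : ℤ) (δ : ℝ) (U u1 u2 : ℝ × ℝ → ℝ) (p : ℝ × ℝ) : Prop :=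
  pdb u1 p = ((u1 p - u2 p) / (p.1 - p.2)) * ((m : ℝ) - (u1 p - u2 p) * pdb U p)
      + (p.1 - p.2) * δ ^ 2 * pdb U p ∧
  pda u2 p = ((u1 p - u2 p) / (p.1 - p.2)) * ((n : ℝ) + (u1 p - u2 p) * pda U p)
      - (p.1 - p.2) * δ ^ 2 * pda U p ∧
  pdb (pda U) p = (1 / (p.1 - p.2)) *
      (2 * (u1 p - u2 p) * pda U p * pdb U p + (n : ℝ) * pdb U p - (m : ℝ) * pda U p)


open Filter Topology

lemma hasDerivAt_lineA (p : ℝ × ℝ) : HasDerivAt (fun x : ℝ => (x, p.2)) ((1 : ℝ), (0 : ℝ)) p.1 :=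
  (hasDerivAt_id p.1).prodMk (hasDerivAt_const p.1 p.2)

lemma hasDerivAt_lineB (p : ℝ × ℝ) : HasDerivAt (fun y : ℝ => (p.1, y)) ((0 : ℝ), (1 : ℝ)) p.2 :=
  (hasDerivAt_const p.2 p.1).prodMk (hasDerivAt_id p.2)

lemma pda_eq_fderiv {f : ℝ × ℝ → ℝ} {p : ℝ × ℝ} (hf : DifferentiableAt ℝ f p) :
    pda f p = fderiv ℝ f p (1, 0) := by
  have hf' : HasFDerivAt f (fderiv ℝ f p) (p.1, p.2) := by
    rw [Prod.mk.eta]; exact hf.hasFDerivAt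
  exact (hf'.comp_hasDerivAt p.1 (hasDerivAt_lineA p)).deriv

lemma pdb_eq_fderiv {f : ℝ × ℝ → ℝ} {p : ℝ × ℝ} (hf : DifferentiableAt ℝ f p) :
    pdb f p = fderiv ℝ f p (0, 1) := by
  have hf' : HasFDerivAt f (fderiv ℝ f p) (p.1, p.2) := by
    rw [Prod.mk.eta]; exact hf.hasFDerivAt
  exact (hf'.comp_hasDerivAt p.2 (hasDerivAt_lineB p)).deriv

lemma hasDerivAt_pda {f : ℝ × ℝ → ℝ} {p : ℝ × ℝ} (hf : DifferentiableAt ℝ f p) :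
    HasDerivAt (fun x => f (x, p.2)) (pda f p) p.1 := by
  rw [pda_eq_fderiv hf]
  have hf' : HasFDerivAt f (fderiv ℝ f p) (p.1, p.2) := by
    rw [Prod.mk.eta]; exact hf.hasFDerivAt
  exact hf'.comp_hasDerivAt p.1 (hasDerivAt_lineA p)

lemma hasDerivAt_pdb {f : ℝ × ℝ → ℝ} {p : ℝ × ℝ} (hf : DifferentiableAt ℝ f p) :
    HasDerivAt (fun y => f (p.1, y)) (pdb f p) p.2 := by
  rw [pdb_eq_fderiv hf]
  have hf' : HasFDerivAt f (fderiv ℝ f p) (p.1, p.2) := by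
    rw [Prod.mk.eta]; exact hf.hasFDerivAt
  exact hf'.comp_hasDerivAt p.2 (hasDerivAt_lineB p)

lemma diffAt_of_contDiffOn {f : ℝ × ℝ → ℝ} {D : Set (ℝ × ℝ)} {n : WithTop ℕ∞}
    (hD : IsOpen D) (hf : ContDiffOn ℝ n f D) (hn : 1 ≤ n) {p : ℝ × ℝ} (hp : p ∈ D) :
    DifferentiableAt ℝ f p :=
  (hf.contDiffAt (hD.mem_nhds hp)).differentiableAt (by rintro rfl; exact absurd hn (by simp))

lemma contDiffOn_pda {f : ℝ × ℝ → ℝ} {D : Set (ℝ × ℝ)} {n m : WithTop ℕ∞} (hD : IsOpen D)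
    (hf : ContDiffOn ℝ n f D) (hmn : m + 1 ≤ n) : ContDiffOn ℝ m (pda f) D := by
  have h1 : ContDiffOn ℝ m (fun q => fderiv ℝ f q (1, 0)) D :=
    (hf.fderiv_of_isOpen hD hmn).clm_apply contDiffOn_const
  exact h1.congr fun q hq =>
    pda_eq_fderiv (diffAt_of_contDiffOn hD hf (le_trans le_add_self hmn) hq)

lemma contDiffOn_pdb {f : ℝ × ℝ → ℝ} {D : Set (ℝ × ℝ)} {n m : WithTop ℕ∞} (hD : IsOpen D)
    (hf : ContDiffOn ℝ n f D) (hmn : m + 1 ≤ n) : ContDiffOn ℝ m (pdb f) D := by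
  have h1 : ContDiffOn ℝ m (fun q => fderiv ℝ f q (0, 1)) D :=
    (hf.fderiv_of_isOpen hD hmn).clm_apply contDiffOn_const
  exact h1.congr fun q hq =>
    pdb_eq_fderiv (diffAt_of_contDiffOn hD hf (le_trans le_add_self hmn) hq)

lemma pda_congr {f g : ℝ × ℝ → ℝ} {p : ℝ × ℝ} (h : f =ᶠ[𝓝 p] g) : pda f p = pda g p := by
  apply Filter.EventuallyEq.deriv_eq
  have ht : Tendsto (fun x : ℝ => (x, p.2)) (𝓝 p.1) (𝓝 p) := by
    rw [← Prod.mk.eta (p := p)]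
    exact ((continuous_id.prodMk continuous_const).tendsto p.1)
  exact h.comp_tendsto ht

lemma pdb_congr {f g : ℝ × ℝ → ℝ} {p : ℝ × ℝ} (h : f =ᶠ[𝓝 p] g) : pdb f p = pdb g p := by
  apply Filter.EventuallyEq.deriv_eq
  have ht : Tendsto (fun y : ℝ => (p.1, y)) (𝓝 p.2) (𝓝 p) := by
    rw [← Prod.mk.eta (p := p)]
    exact ((continuous_const.prodMk continuous_id).tendsto p.2)
  exact h.comp_tendsto ht

lemma pd_symm {f : ℝ × ℝ → ℝ} {D : Set (ℝ × ℝ)} (hD : IsOpen D)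
    (hf : ContDiffOn ℝ 2 f D) {p : ℝ × ℝ} (hp : p ∈ D) :
    pda (pdb f) p = pdb (pda f) p := by
  have hmem : ∀ᶠ q in 𝓝 p, q ∈ D := hD.mem_nhds hp
  have hdiff : ∀ q ∈ D, DifferentiableAt ℝ f q := fun q hq =>
    diffAt_of_contDiffOn hD hf one_le_two hq
  have hev : ∀ᶠ q in 𝓝 p, HasFDerivAt f (fderiv ℝ f q) q :=
    hmem.mono fun q hq => (hdiff q hq).hasFDerivAt
  have hf'cd : ContDiffOn ℝ 1 (fderiv ℝ f) D := hf.fderiv_of_isOpen hD (by norm_num)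
  have hf'd : DifferentiableAt ℝ (fderiv ℝ f) p :=
    (hf'cd.contDiffAt (hD.mem_nhds hp)).differentiableAt one_ne_zero
  have hsym := second_derivative_symmetric_of_eventually hev hf'd.hasFDerivAt
  have h1 : pdb f =ᶠ[𝓝 p] fun q => fderiv ℝ f q (0, 1) :=
    hmem.mono fun q hq => pdb_eq_fderiv (hdiff q hq)
  have h2 : pda f =ᶠ[𝓝 p] fun q => fderiv ℝ f q (1, 0) :=
    hmem.mono fun q hq => pda_eq_fderiv (hdiff q hq)
  have h3 : DifferentiableAt ℝ (fun q => fderiv ℝ f q (0, 1)) p :=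
    hf'd.clm_apply (differentiableAt_const _)
  have h4 : DifferentiableAt ℝ (fun q => fderiv ℝ f q (1, 0)) p :=
    hf'd.clm_apply (differentiableAt_const _)
  rw [pda_congr h1, pdb_congr h2, pda_eq_fderiv h3, pdb_eq_fderiv h4,
    fderiv_clm_apply hf'd (differentiableAt_const _),
    fderiv_clm_apply hf'd (differentiableAt_const _)]
  simp only [fderiv_const, fderiv_const_apply, Pi.zero_apply, ContinuousLinearMap.comp_zero,
    ContinuousLinearMap.flip_apply, ContinuousLinearMap.add_apply,
    ContinuousLinearMap.zero_apply, zero_add, ContinuousLinearMap.zero_comp]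
  exact hsym _ _


set_option maxHeartbeats 4000000 in
/-- Decoupling of S[U;δ] to the δ-RPDE. -/
theorem SUdelta_decouples_to_deltaRPDE
    (n m : ℤ) (δ : ℝ) (U u1 u2 : ℝ × ℝ → ℝ)
    (D : Set (ℝ × ℝ)) (hD : IsOpen D)
    (hαβ : ∀ p ∈ D, p.1 ≠ p.2)
    (hUa : ∀ p ∈ D, pda U p ≠ 0) (hUb : ∀ p ∈ D, pdb U p ≠ 0)
    (hU : ContDiffOn ℝ 4 U D)
    (hu1 : ContDiffOn ℝ 2 u1 D) (hu2 : ContDiffOn ℝ 2 u2 D)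
    (hsys : ∀ p ∈ D, SUdelta n m δ U u1 u2 p) :
    ∀ p ∈ D,
      u1 p - u2 p = (1 / 2) * ((p.1 - p.2) * pdb (pda U) p / (pda U p * pdb U p)
          + (m : ℝ) / pdb U p - (n : ℝ) / pda U p) ∧
      Rexpr n m U p + 2 * δ ^ 2 * pda U p * pdb U p *
          (2 * pdb (pda U) p - (pda U p - pdb U p) / (p.1 - p.2)) = 0 := by
  -- smoothness of the iterated partial derivatives
  have cUa : ContDiffOn ℝ 3 (pda U) D := contDiffOn_pda hD hU (by norm_num)
  have cUb : ContDiffOn ℝ 3 (pdb U) D := contDiffOn_pdb hD hU (by norm_num)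
  have cUaa : ContDiffOn ℝ 2 (pda (pda U)) D := contDiffOn_pda hD cUa (by norm_num)
  have cUab : ContDiffOn ℝ 2 (pdb (pda U)) D := contDiffOn_pdb hD cUa (by norm_num)
  have cUbb : ContDiffOn ℝ 2 (pdb (pdb U)) D := contDiffOn_pdb hD cUb (by norm_num)
  have cUaab : ContDiffOn ℝ 1 (pdb (pda (pda U))) D := contDiffOn_pdb hD cUaa (by norm_num)
  have cu1a : ContDiffOn ℝ 1 (pda u1) D := contDiffOn_pda hD hu1 (by norm_num)
  have cu2a : ContDiffOn ℝ 1 (pda u2) D := contDiffOn_pda hD hu2 (by norm_num)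
  -- pointwise differentiability
  have du1 : ∀ q ∈ D, DifferentiableAt ℝ u1 q := fun q hq =>
    diffAt_of_contDiffOn hD hu1 (by norm_num) hq
  have du2 : ∀ q ∈ D, DifferentiableAt ℝ u2 q := fun q hq =>
    diffAt_of_contDiffOn hD hu2 (by norm_num) hq
  have dUa : ∀ q ∈ D, DifferentiableAt ℝ (pda U) q := fun q hq =>
    diffAt_of_contDiffOn hD cUa (by norm_num) hq
  have dUb : ∀ q ∈ D, DifferentiableAt ℝ (pdb U) q := fun q hq =>
    diffAt_of_contDiffOn hD cUb (by norm_num) hq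
  have dUaa : ∀ q ∈ D, DifferentiableAt ℝ (pda (pda U)) q := fun q hq =>
    diffAt_of_contDiffOn hD cUaa (by norm_num) hq
  have dUab : ∀ q ∈ D, DifferentiableAt ℝ (pdb (pda U)) q := fun q hq =>
    diffAt_of_contDiffOn hD cUab (by norm_num) hq
  have dUbb : ∀ q ∈ D, DifferentiableAt ℝ (pdb (pdb U)) q := fun q hq =>
    diffAt_of_contDiffOn hD cUbb (by norm_num) hq
  have dUaab : ∀ q ∈ D, DifferentiableAt ℝ (pdb (pda (pda U))) q := fun q hq =>
    diffAt_of_contDiffOn hD cUaab (by norm_num) hq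
  have du1a : ∀ q ∈ D, DifferentiableAt ℝ (pda u1) q := fun q hq =>
    diffAt_of_contDiffOn hD cu1a (by norm_num) hq
  have du2a : ∀ q ∈ D, DifferentiableAt ℝ (pda u2) q := fun q hq =>
    diffAt_of_contDiffOn hD cu2a (by norm_num) hq
  -- horizontal and vertical line neighbourhoods
  have lineAmem : ∀ q : ℝ × ℝ, q ∈ D → ∀ᶠ x in nhds q.1, (x, q.2) ∈ D := by
    intro q hq
    have hop : IsOpen {x : ℝ | (x, q.2) ∈ D} :=
      hD.preimage (continuous_id.prodMk continuous_const)
    exact hop.mem_nhds (by simpa using hq)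
  have lineBmem : ∀ q : ℝ × ℝ, q ∈ D → ∀ᶠ y in nhds q.2, (q.1, y) ∈ D := by
    intro q hq
    have hop : IsOpen {y : ℝ | (q.1, y) ∈ D} :=
      hD.preimage (continuous_const.prodMk continuous_id)
    exact hop.mem_nhds (by simpa using hq)
  -- (G3) in multiplied form, on D
  have hE3 : ∀ q ∈ D, (q.1 - q.2) * pdb (pda U) q
      = 2 * (u1 q - u2 q) * pda U q * pdb U q + (n:ℝ) * pdb U q - (m:ℝ) * pda U q := by
    intro q hq
    have h := (hsys q hq).2.2
    have hsq : q.1 - q.2 ≠ 0 := sub_ne_zero.2 (hαβ q hq)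
    rw [h]; field_simp
  -- (G1), (G2) as identities on D
  have hE1 : ∀ q ∈ D, pdb u1 q = (u1 q - u2 q) / (q.1 - q.2) *
      ((m:ℝ) - (u1 q - u2 q) * pdb U q) + (q.1 - q.2) * δ ^ 2 * pdb U q := fun q hq =>
    (hsys q hq).1
  have hE2 : ∀ q ∈ D, pda u2 q = (u1 q - u2 q) / (q.1 - q.2) *
      ((n:ℝ) + (u1 q - u2 q) * pda U q) - (q.1 - q.2) * δ ^ 2 * pda U q := fun q hq =>
    (hsys q hq).2.1
  -- α-derivative of (G3), in canonical order, on D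
  have hAfun : ∀ q ∈ D, pdb (pda U) q + (q.1 - q.2) * pdb (pda (pda U)) q
      = 2 * (pda u1 q - pda u2 q) * pda U q * pdb U q
        + 2 * (u1 q - u2 q) * (pda (pda U) q * pdb U q + pda U q * pdb (pda U) q)
        + (n:ℝ) * pdb (pda U) q - (m:ℝ) * pda (pda U) q := by
    intro q hq
    have hF : HasDerivAt (fun x => (x - q.2) * pdb (pda U) (x, q.2))
        (1 * pdb (pda U) q + (q.1 - q.2) * pda (pdb (pda U)) q) q.1 :=
      ((hasDerivAt_id q.1).sub_const q.2).mul (hasDerivAt_pda (dUab q hq))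
    have hG : HasDerivAt (fun x => 2 * (u1 (x, q.2) - u2 (x, q.2)) * pda U (x, q.2) *
          pdb U (x, q.2) + (n:ℝ) * pdb U (x, q.2) - (m:ℝ) * pda U (x, q.2))
        ((2 * (pda u1 q - pda u2 q) * pda U q + 2 * (u1 q - u2 q) * pda (pda U) q) * pdb U q
          + 2 * (u1 q - u2 q) * pda U q * pda (pdb U) q
          + (n:ℝ) * pda (pdb U) q - (m:ℝ) * pda (pda U) q) q.1 :=
      (((((hasDerivAt_pda (du1 q hq)).sub (hasDerivAt_pda (du2 q hq))).const_mul 2).mul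
        (hasDerivAt_pda (dUa q hq))).mul (hasDerivAt_pda (dUb q hq))).add
        ((hasDerivAt_pda (dUb q hq)).const_mul (n:ℝ)) |>.sub
        ((hasDerivAt_pda (dUa q hq)).const_mul (m:ℝ))
    have hev : (fun x => (x - q.2) * pdb (pda U) (x, q.2)) =ᶠ[nhds q.1]
        (fun x => 2 * (u1 (x, q.2) - u2 (x, q.2)) * pda U (x, q.2) * pdb U (x, q.2)
          + (n:ℝ) * pdb U (x, q.2) - (m:ℝ) * pda U (x, q.2)) :=
      (lineAmem q hq).mono fun x hx => hE3 (x, q.2) hx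
    have hde := hev.deriv_eq
    rw [hF.deriv, hG.deriv] at hde
    have s2 : pda (pdb U) q = pdb (pda U) q := pd_symm hD (hU.of_le (by norm_num)) hq
    have s3 : pda (pdb (pda U)) q = pdb (pda (pda U)) q :=
      pd_symm hD (cUa.of_le (by norm_num)) hq
    rw [s2, s3] at hde
    linear_combination hde
  intro p hp
  have hs : p.1 - p.2 ≠ 0 := sub_ne_zero.2 (hαβ p hp)
  have ha : pda U p ≠ 0 := hUa p hp
  have hb : pdb U p ≠ 0 := hUb p hp
  -- h1 : (G3) at p
  have h1c := hE3 p hp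
  -- h2 : α-derivative of (G3) at p
  have h2c := hAfun p hp
  -- h3 : β-derivative of (G3) at p
  have h3c : -(1 : ℝ) * pdb (pda U) p + (p.1 - p.2) * pdb (pdb (pda U)) p
      = 2 * (pdb u1 p - pdb u2 p) * pda U p * pdb U p
        + 2 * (u1 p - u2 p) * (pdb (pda U) p * pdb U p + pda U p * pdb (pdb U) p)
        + (n:ℝ) * pdb (pdb U) p - (m:ℝ) * pdb (pda U) p := by
    have hF : HasDerivAt (fun y => (p.1 - y) * pdb (pda U) (p.1, y))
        ((0 - 1) * pdb (pda U) p + (p.1 - p.2) * pdb (pdb (pda U)) p) p.2 :=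
      ((hasDerivAt_const p.2 p.1).sub (hasDerivAt_id p.2)).mul (hasDerivAt_pdb (dUab p hp))
    have hG : HasDerivAt (fun y => 2 * (u1 (p.1, y) - u2 (p.1, y)) * pda U (p.1, y) *
          pdb U (p.1, y) + (n:ℝ) * pdb U (p.1, y) - (m:ℝ) * pda U (p.1, y))
        ((2 * (pdb u1 p - pdb u2 p) * pda U p + 2 * (u1 p - u2 p) * pdb (pda U) p) * pdb U p
          + 2 * (u1 p - u2 p) * pda U p * pdb (pdb U) p
          + (n:ℝ) * pdb (pdb U) p - (m:ℝ) * pdb (pda U) p) p.2 :=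
      (((((hasDerivAt_pdb (du1 p hp)).sub (hasDerivAt_pdb (du2 p hp))).const_mul 2).mul
        (hasDerivAt_pdb (dUa p hp))).mul (hasDerivAt_pdb (dUb p hp))).add
        ((hasDerivAt_pdb (dUb p hp)).const_mul (n:ℝ)) |>.sub
        ((hasDerivAt_pdb (dUa p hp)).const_mul (m:ℝ))
    have hev : (fun y => (p.1 - y) * pdb (pda U) (p.1, y)) =ᶠ[nhds p.2]
        (fun y => 2 * (u1 (p.1, y) - u2 (p.1, y)) * pda U (p.1, y) * pdb U (p.1, y)
          + (n:ℝ) * pdb U (p.1, y) - (m:ℝ) * pda U (p.1, y)) :=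
      (lineBmem p hp).mono fun y hy => hE3 (p.1, y) hy
    have hde := hev.deriv_eq
    rw [hF.deriv, hG.deriv] at hde
    linear_combination hde
  -- h4 : α-derivative of (G1) at p, plus symmetry of mixed u1-derivatives
  have h4c : (p.1 - p.2) ^ 2 * pdb (pda u1) p
      = ((pda u1 p - pda u2 p) * (p.1 - p.2) - (u1 p - u2 p)) *
          ((m:ℝ) - (u1 p - u2 p) * pdb U p)
        + (u1 p - u2 p) * (p.1 - p.2) *
          (-((pda u1 p - pda u2 p) * pdb U p + (u1 p - u2 p) * pdb (pda U) p))
        + (p.1 - p.2) ^ 2 * (δ ^ 2 * pdb U p) + (p.1 - p.2) ^ 3 * (δ ^ 2 * pdb (pda U) p) := by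
    have hG : HasDerivAt (fun x => (u1 (x, p.2) - u2 (x, p.2)) / (x - p.2) *
          ((m:ℝ) - (u1 (x, p.2) - u2 (x, p.2)) * pdb U (x, p.2))
          + (x - p.2) * δ ^ 2 * pdb U (x, p.2))
        ((((pda u1 p - pda u2 p) * (p.1 - p.2) - (u1 p - u2 p) * 1) / (p.1 - p.2) ^ 2) *
          ((m:ℝ) - (u1 p - u2 p) * pdb U p)
          + (u1 p - u2 p) / (p.1 - p.2) *
            (0 - ((pda u1 p - pda u2 p) * pdb U p + (u1 p - u2 p) * pda (pdb U) p))
          + ((1 * δ ^ 2) * pdb U p + (p.1 - p.2) * δ ^ 2 * pda (pdb U) p)) p.1 :=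
      ((((hasDerivAt_pda (du1 p hp)).sub (hasDerivAt_pda (du2 p hp))).div
          ((hasDerivAt_id p.1).sub_const p.2) hs).mul
        ((hasDerivAt_const p.1 ((m:ℝ))).sub
          (((hasDerivAt_pda (du1 p hp)).sub (hasDerivAt_pda (du2 p hp))).mul
            (hasDerivAt_pda (dUb p hp))))).add
        ((((hasDerivAt_id p.1).sub_const p.2).mul_const (δ ^ 2)).mul
          (hasDerivAt_pda (dUb p hp)))
    have hev : (fun x => pdb u1 (x, p.2)) =ᶠ[nhds p.1]
        (fun x => (u1 (x, p.2) - u2 (x, p.2)) / (x - p.2) *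
          ((m:ℝ) - (u1 (x, p.2) - u2 (x, p.2)) * pdb U (x, p.2))
          + (x - p.2) * δ ^ 2 * pdb U (x, p.2)) :=
      (lineAmem p hp).mono fun x hx => hE1 (x, p.2) hx
    have hde := hev.deriv_eq
    rw [hG.deriv] at hde
    have hpda : pda (pdb u1) p = deriv (fun x => pdb u1 (x, p.2)) p.1 := rfl
    rw [← hpda] at hde
    have hsym : pdb (pda u1) p = pda (pdb u1) p := (pd_symm hD hu1 hp).symm
    have s2 : pda (pdb U) p = pdb (pda U) p := pd_symm hD (hU.of_le (by norm_num)) hp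
    rw [s2] at hde
    rw [hsym, hde]
    field_simp
    ring
  -- h5 : β-derivative of (G2) at p
  have h5c : (p.1 - p.2) ^ 2 * pdb (pda u2) p
      = ((pdb u1 p - pdb u2 p) * (p.1 - p.2) + (u1 p - u2 p)) *
          ((n:ℝ) + (u1 p - u2 p) * pda U p)
        + (u1 p - u2 p) * (p.1 - p.2) *
          ((pdb u1 p - pdb u2 p) * pda U p + (u1 p - u2 p) * pdb (pda U) p)
        + (p.1 - p.2) ^ 2 * (δ ^ 2 * pda U p) - (p.1 - p.2) ^ 3 * (δ ^ 2 * pdb (pda U) p) := by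
    have hG : HasDerivAt (fun y => (u1 (p.1, y) - u2 (p.1, y)) / (p.1 - y) *
          ((n:ℝ) + (u1 (p.1, y) - u2 (p.1, y)) * pda U (p.1, y))
          - (p.1 - y) * δ ^ 2 * pda U (p.1, y))
        ((((pdb u1 p - pdb u2 p) * (p.1 - p.2) - (u1 p - u2 p) * (0 - 1)) / (p.1 - p.2) ^ 2) *
          ((n:ℝ) + (u1 p - u2 p) * pda U p)
          + (u1 p - u2 p) / (p.1 - p.2) *
            (0 + ((pdb u1 p - pdb u2 p) * pda U p + (u1 p - u2 p) * pdb (pda U) p))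
          - (((0 - 1) * δ ^ 2) * pda U p + (p.1 - p.2) * δ ^ 2 * pdb (pda U) p)) p.2 :=
      ((((hasDerivAt_pdb (du1 p hp)).sub (hasDerivAt_pdb (du2 p hp))).div
          ((hasDerivAt_const p.2 p.1).sub (hasDerivAt_id p.2)) hs).mul
        ((hasDerivAt_const p.2 ((n:ℝ))).add
          (((hasDerivAt_pdb (du1 p hp)).sub (hasDerivAt_pdb (du2 p hp))).mul
            (hasDerivAt_pdb (dUa p hp))))).sub
        ((((hasDerivAt_const p.2 p.1).sub (hasDerivAt_id p.2)).mul_const (δ ^ 2)).mul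
          (hasDerivAt_pdb (dUa p hp)))
    have hev : (fun y => pda u2 (p.1, y)) =ᶠ[nhds p.2]
        (fun y => (u1 (p.1, y) - u2 (p.1, y)) / (p.1 - y) *
          ((n:ℝ) + (u1 (p.1, y) - u2 (p.1, y)) * pda U (p.1, y))
          - (p.1 - y) * δ ^ 2 * pda U (p.1, y)) :=
      (lineBmem p hp).mono fun y hy => hE2 (p.1, y) hy
    have hde := hev.deriv_eq
    rw [hG.deriv] at hde
    have hpdb : pdb (pda u2) p = deriv (fun y => pda u2 (p.1, y)) p.2 := rfl
    rw [← hpdb] at hde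
    rw [hde]
    field_simp
    ring
  -- h6 : β-derivative of h2 at p
  have h6c : pdb (pdb (pda U)) p - pdb (pda (pda U)) p + (p.1 - p.2) * pdb (pdb (pda (pda U))) p
      = 2 * (pdb (pda u1) p - pdb (pda u2) p) * pda U p * pdb U p
        + 2 * (pda u1 p - pda u2 p) * (pdb (pda U) p * pdb U p + pda U p * pdb (pdb U) p)
        + 2 * (pdb u1 p - pdb u2 p) * (pda (pda U) p * pdb U p + pda U p * pdb (pda U) p)
        + 2 * (u1 p - u2 p) * (pdb (pda (pda U)) p * pdb U p + pda (pda U) p * pdb (pdb U) p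
            + pdb (pda U) p * pdb (pda U) p + pda U p * pdb (pdb (pda U)) p)
        + (n:ℝ) * pdb (pdb (pda U)) p - (m:ℝ) * pdb (pda (pda U)) p := by
    have hF : HasDerivAt (fun y => pdb (pda U) (p.1, y) + (p.1 - y) * pdb (pda (pda U)) (p.1, y))
        (pdb (pdb (pda U)) p + ((0 - 1) * pdb (pda (pda U)) p
          + (p.1 - p.2) * pdb (pdb (pda (pda U))) p)) p.2 :=
      (hasDerivAt_pdb (dUab p hp)).add
        (((hasDerivAt_const p.2 p.1).sub (hasDerivAt_id p.2)).mul (hasDerivAt_pdb (dUaab p hp)))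
    have hG : HasDerivAt (fun y => 2 * (pda u1 (p.1, y) - pda u2 (p.1, y)) * pda U (p.1, y) *
          pdb U (p.1, y)
          + 2 * (u1 (p.1, y) - u2 (p.1, y)) * (pda (pda U) (p.1, y) * pdb U (p.1, y)
            + pda U (p.1, y) * pdb (pda U) (p.1, y))
          + (n:ℝ) * pdb (pda U) (p.1, y) - (m:ℝ) * pda (pda U) (p.1, y))
        ((2 * (pdb (pda u1) p - pdb (pda u2) p) * pda U p
            + 2 * (pda u1 p - pda u2 p) * pdb (pda U) p) * pdb U p
          + 2 * (pda u1 p - pda u2 p) * pda U p * pdb (pdb U) p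
          + (2 * (pdb u1 p - pdb u2 p) * (pda (pda U) p * pdb U p + pda U p * pdb (pda U) p)
            + 2 * (u1 p - u2 p) * ((pdb (pda (pda U)) p * pdb U p
                + pda (pda U) p * pdb (pdb U) p)
              + (pdb (pda U) p * pdb (pda U) p + pda U p * pdb (pdb (pda U)) p)))
          + (n:ℝ) * pdb (pdb (pda U)) p - (m:ℝ) * pdb (pda (pda U)) p) p.2 :=
      ((((((hasDerivAt_pdb (du1a p hp)).sub (hasDerivAt_pdb (du2a p hp))).const_mul 2).mul
        (hasDerivAt_pdb (dUa p hp))).mul (hasDerivAt_pdb (dUb p hp))).add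
        ((((hasDerivAt_pdb (du1 p hp)).sub (hasDerivAt_pdb (du2 p hp))).const_mul 2).mul
          (((hasDerivAt_pdb (dUaa p hp)).mul (hasDerivAt_pdb (dUb p hp))).add
            ((hasDerivAt_pdb (dUa p hp)).mul (hasDerivAt_pdb (dUab p hp)))))).add
        ((hasDerivAt_pdb (dUab p hp)).const_mul (n:ℝ)) |>.sub
        ((hasDerivAt_pdb (dUaa p hp)).const_mul (m:ℝ))
    have hev : (fun y => pdb (pda U) (p.1, y) + (p.1 - y) * pdb (pda (pda U)) (p.1, y))
        =ᶠ[nhds p.2]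
        (fun y => 2 * (pda u1 (p.1, y) - pda u2 (p.1, y)) * pda U (p.1, y) * pdb U (p.1, y)
          + 2 * (u1 (p.1, y) - u2 (p.1, y)) * (pda (pda U) (p.1, y) * pdb U (p.1, y)
            + pda U (p.1, y) * pdb (pda U) (p.1, y))
          + (n:ℝ) * pdb (pda U) (p.1, y) - (m:ℝ) * pda (pda U) (p.1, y)) :=
      (lineBmem p hp).mono fun y hy => hAfun (p.1, y) hy
    have hde := hev.deriv_eq
    rw [hF.deriv, hG.deriv] at hde
    linear_combination hde
  have part1 : u1 p - u2 p = (1 / 2) * ((p.1 - p.2) * pdb (pda U) p / (pda U p * pdb U p)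
      + (m : ℝ) / pdb U p - (n : ℝ) / pda U p) := by
    have hsolve : u1 p - u2 p = ((p.1 - p.2) * pdb (pda U) p - (n:ℝ) * pdb U p + (m:ℝ) * pda U p)
        / (2 * (pda U p * pdb U p)) := by
      rw [eq_div_iff (mul_ne_zero two_ne_zero (mul_ne_zero ha hb))]
      linear_combination (-1 : ℝ) * h1c
    rw [hsolve]
    field_simp
    ring
  clear hAfun hE1 hE2 hE3 du1 du2 dUa dUb dUaa dUab dUbb dUaab du1a du2a lineAmem lineBmem
  clear cUa cUb cUaa cUab cUbb cUaab cu1a cu2a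
  set aa := pda U p with haa
  set bb := pdb U p with hbb
  set cc := pda (pda U) p with hcc
  set dd := pdb (pda U) p with hdd
  set ee := pdb (pdb U) p with hee
  set gg := pdb (pda (pda U)) p with hgg
  set hh := pdb (pdb (pda U)) p with hhh
  set kk := pdb (pdb (pda (pda U))) p with hkk
  set ss := p.1 - p.2 with hss
  set vv := u1 p - u2 p with hvv
  set va := pda u1 p - pda u2 p with hvva
  set vb := pdb u1 p - pdb u2 p with hvvb
  set q1 := pdb (pda u1) p with hq1
  set q2 := pdb (pda u2) p with hq2
  have hval : Rexpr n m U p = -kk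
      + gg * (1 / ss + ee / bb + dd / aa)
      + hh * (1 / (-ss) + cc / aa + dd / bb)
      - cc * ee * dd / (aa * bb)
      + cc * ((n : ℝ) ^ 2 * bb ^ 2 / (ss ^ 2 * aa ^ 2) - dd / (ss * aa) - dd ^ 2 / aa ^ 2)
      + ee * ((m : ℝ) ^ 2 * aa ^ 2 / (ss ^ 2 * bb ^ 2) + dd / (ss * bb) - dd ^ 2 / bb ^ 2)
      + ((n : ℝ) ^ 2 / (2 * ss ^ 3)) * (bb / aa) * (aa + bb + 2 * (-ss) * dd)
      - ((m : ℝ) ^ 2 / (2 * ss ^ 3)) * (aa / bb) * (aa + bb + 2 * ss * dd)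
      + (1 / (2 * ss)) * dd ^ 2 * (1 / aa - 1 / bb) := rfl
  clear_value aa bb cc dd ee gg hh kk ss vv va vb q1 q2
  have key : (16:ℝ) * aa^2 * bb^4 * cc * dd^2 * ss^5 +
      (-16:ℝ) * aa^2 * bb^6 * cc * ss^3 * (n:ℝ)^2 +
      (16:ℝ) * aa^3 * bb^3 * cc * dd * ee * ss^5 +
      (-16:ℝ) * aa^3 * bb^4 * dd * gg * ss^5 +
      (-8:ℝ) * aa^3 * bb^4 * dd^2 * ss^4 +
      (-16:ℝ) * aa^3 * bb^4 * cc * hh * ss^5 +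
      (16:ℝ) * aa^3 * bb^4 * cc * dd * ss^4 +
      (16:ℝ) * aa^3 * bb^5 * dd * ss^3 * (n:ℝ)^2 +
      (-8:ℝ) * aa^3 * bb^6 * ss^2 * (n:ℝ)^2 +
      (16:ℝ) * aa^4 * bb^2 * dd^2 * ee * ss^5 +
      (-16:ℝ) * aa^4 * bb^3 * ee * gg * ss^5 +
      (-16:ℝ) * aa^4 * bb^3 * dd * hh * ss^5 +
      (-16:ℝ) * aa^4 * bb^3 * dd * ee * ss^4 +
      (8:ℝ) * aa^4 * bb^3 * dd^2 * ss^4 +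
      (16:ℝ) * aa^4 * bb^4 * kk * ss^5 +
      (16:ℝ) * aa^4 * bb^4 * hh * ss^4 +
      (-16:ℝ) * aa^4 * bb^4 * gg * ss^4 +
      (-8:ℝ) * aa^4 * bb^5 * ss^2 * (n:ℝ)^2 +
      (16:ℝ) * aa^5 * bb^3 * dd * ss^3 * (m:ℝ)^2 +
      (8:ℝ) * aa^5 * bb^4 * ss^2 * (m:ℝ)^2 +
      (-64:ℝ) * aa^5 * bb^5 * dd * ss^5 * δ^2 +
      (-32:ℝ) * aa^5 * bb^6 * ss^4 * δ^2 +
      (-16:ℝ) * aa^6 * bb^2 * ee * ss^3 * (m:ℝ)^2 +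
      (8:ℝ) * aa^6 * bb^3 * ss^2 * (m:ℝ)^2 +
      (32:ℝ) * aa^6 * bb^5 * ss^4 * δ^2 = 0 := by
    linear_combination ((16:ℝ) * aa^2 * bb^4 * cc * dd * ss^4 +
      (16:ℝ) * aa^2 * bb^5 * cc * ss^3 * (n:ℝ) +
      (16:ℝ) * aa^3 * bb^3 * cc * ee * ss^4 +
      (8:ℝ) * aa^3 * bb^4 * dd * ss^3 +
      (-16:ℝ) * aa^3 * bb^4 * dd * ss^3 * (n:ℝ) +
      (16:ℝ) * aa^3 * bb^4 * cc * ss^3 * (m:ℝ) +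
      (8:ℝ) * aa^3 * bb^5 * ss^2 * (n:ℝ) +
      (-32:ℝ) * aa^3 * bb^5 * cc * ss^3 * vv +
      (16:ℝ) * aa^4 * bb^2 * dd * ee * ss^4 +
      (-16:ℝ) * aa^4 * bb^3 * ee * ss^3 * (n:ℝ) +
      (-8:ℝ) * aa^4 * bb^3 * dd * ss^3 +
      (16:ℝ) * aa^4 * bb^3 * dd * ss^3 * (m:ℝ) +
      (8:ℝ) * aa^4 * bb^4 * ss^2 * (m:ℝ) +
      (8:ℝ) * aa^4 * bb^4 * ss^2 * (n:ℝ) +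
      (-32:ℝ) * aa^4 * bb^4 * dd * ss^3 * vv +
      (-16:ℝ) * aa^4 * bb^5 * ss^2 * vv +
      (-16:ℝ) * aa^5 * bb^2 * ee * ss^3 * (m:ℝ) +
      (8:ℝ) * aa^5 * bb^3 * ss^2 * (m:ℝ) +
      (-32:ℝ) * aa^5 * bb^3 * ee * ss^3 * vv +
      (16:ℝ) * aa^5 * bb^4 * ss^2 * vv) * h1c + ((-16:ℝ) * aa^3 * bb^4 * dd * ss^4 +
      (-16:ℝ) * aa^4 * bb^3 * ee * ss^4 +
      (-16:ℝ) * aa^4 * bb^4 * ss^3 * (m:ℝ) +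
      (32:ℝ) * aa^4 * bb^5 * ss^3 * vv) * h2c + ((-16:ℝ) * aa^3 * bb^4 * cc * ss^4 +
      (-16:ℝ) * aa^4 * bb^3 * dd * ss^4 +
      (16:ℝ) * aa^4 * bb^4 * ss^3 * (n:ℝ) +
      (32:ℝ) * aa^5 * bb^4 * ss^3 * vv) * h3c +
      ((32:ℝ) * aa^5 * bb^5 * ss^2) * h4c + ((-32:ℝ) * aa^5 * bb^5 * ss^2) * h5c + ((16:ℝ) * aa^4 * bb^4 * ss^4) * h6c
  have h8 : ((-8:ℝ) * aa^2 * bb^2 * ss^2) ≠ 0 :=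
    mul_ne_zero (mul_ne_zero (mul_ne_zero (by norm_num) (pow_ne_zero 2 ha))
      (pow_ne_zero 2 hb)) (pow_ne_zero 2 hs)
  have hBIG : (-2:ℝ) * bb^2 * cc * dd^2 * ss^3 +
      (2:ℝ) * bb^4 * cc * ss * (n:ℝ)^2 +
      (-2:ℝ) * aa * bb * cc * dd * ee * ss^3 +
      (2:ℝ) * aa * bb^2 * dd * gg * ss^3 +
      (1:ℝ) * aa * bb^2 * dd^2 * ss^2 +
      (2:ℝ) * aa * bb^2 * cc * hh * ss^3 +
      (-2:ℝ) * aa * bb^2 * cc * dd * ss^2 +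
      (-2:ℝ) * aa * bb^3 * dd * ss * (n:ℝ)^2 +
      (1:ℝ) * aa * bb^4 * (n:ℝ)^2 +
      (-2:ℝ) * aa^2 * dd^2 * ee * ss^3 +
      (2:ℝ) * aa^2 * bb * ee * gg * ss^3 +
      (2:ℝ) * aa^2 * bb * dd * hh * ss^3 +
      (2:ℝ) * aa^2 * bb * dd * ee * ss^2 +
      (-1:ℝ) * aa^2 * bb * dd^2 * ss^2 +
      (-2:ℝ) * aa^2 * bb^2 * kk * ss^3 +
      (-2:ℝ) * aa^2 * bb^2 * hh * ss^2 +
      (2:ℝ) * aa^2 * bb^2 * gg * ss^2 +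
      (1:ℝ) * aa^2 * bb^3 * (n:ℝ)^2 +
      (-2:ℝ) * aa^3 * bb * dd * ss * (m:ℝ)^2 +
      (-1:ℝ) * aa^3 * bb^2 * (m:ℝ)^2 +
      (8:ℝ) * aa^3 * bb^3 * dd * ss^3 * δ^2 +
      (4:ℝ) * aa^3 * bb^4 * ss^2 * δ^2 +
      (2:ℝ) * aa^4 * ee * ss * (m:ℝ)^2 +
      (-1:ℝ) * aa^4 * bb * (m:ℝ)^2 +
      (-4:ℝ) * aa^4 * bb^3 * ss^2 * δ^2 = 0 := by
    have h2 : ((-8:ℝ) * aa^2 * bb^2 * ss^2) * ((-2:ℝ) * bb^2 * cc * dd^2 * ss^3 +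
      (2:ℝ) * bb^4 * cc * ss * (n:ℝ)^2 +
      (-2:ℝ) * aa * bb * cc * dd * ee * ss^3 +
      (2:ℝ) * aa * bb^2 * dd * gg * ss^3 +
      (1:ℝ) * aa * bb^2 * dd^2 * ss^2 +
      (2:ℝ) * aa * bb^2 * cc * hh * ss^3 +
      (-2:ℝ) * aa * bb^2 * cc * dd * ss^2 +
      (-2:ℝ) * aa * bb^3 * dd * ss * (n:ℝ)^2 +
      (1:ℝ) * aa * bb^4 * (n:ℝ)^2 +
      (-2:ℝ) * aa^2 * dd^2 * ee * ss^3 +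
      (2:ℝ) * aa^2 * bb * ee * gg * ss^3 +
      (2:ℝ) * aa^2 * bb * dd * hh * ss^3 +
      (2:ℝ) * aa^2 * bb * dd * ee * ss^2 +
      (-1:ℝ) * aa^2 * bb * dd^2 * ss^2 +
      (-2:ℝ) * aa^2 * bb^2 * kk * ss^3 +
      (-2:ℝ) * aa^2 * bb^2 * hh * ss^2 +
      (2:ℝ) * aa^2 * bb^2 * gg * ss^2 +
      (1:ℝ) * aa^2 * bb^3 * (n:ℝ)^2 +
      (-2:ℝ) * aa^3 * bb * dd * ss * (m:ℝ)^2 +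
      (-1:ℝ) * aa^3 * bb^2 * (m:ℝ)^2 +
      (8:ℝ) * aa^3 * bb^3 * dd * ss^3 * δ^2 +
      (4:ℝ) * aa^3 * bb^4 * ss^2 * δ^2 +
      (2:ℝ) * aa^4 * ee * ss * (m:ℝ)^2 +
      (-1:ℝ) * aa^4 * bb * (m:ℝ)^2 +
      (-4:ℝ) * aa^4 * bb^3 * ss^2 * δ^2) = 0 := by linear_combination key
    exact (mul_eq_zero.mp h2).resolve_left h8
  refine ⟨part1, ?_⟩
  rw [hval]
  simp only [div_neg]
  have hfin : -kk
        + gg * (1 / ss + ee / bb + dd / aa)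
        + hh * (-(1 / ss) + cc / aa + dd / bb)
        - cc * ee * dd / (aa * bb)
        + cc * ((n : ℝ) ^ 2 * bb ^ 2 / (ss ^ 2 * aa ^ 2) - dd / (ss * aa) - dd ^ 2 / aa ^ 2)
        + ee * ((m : ℝ) ^ 2 * aa ^ 2 / (ss ^ 2 * bb ^ 2) + dd / (ss * bb) - dd ^ 2 / bb ^ 2)
        + ((n : ℝ) ^ 2 / (2 * ss ^ 3)) * (bb / aa) * (aa + bb + 2 * (-ss) * dd)
        - ((m : ℝ) ^ 2 / (2 * ss ^ 3)) * (aa / bb) * (aa + bb + 2 * ss * dd)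
        + (1 / (2 * ss)) * dd ^ 2 * (1 / aa - 1 / bb)
        + 2 * δ ^ 2 * aa * bb * (2 * dd - (aa - bb) / ss)
        = ((-2:ℝ) * bb^2 * cc * dd^2 * ss^3 +
      (2:ℝ) * bb^4 * cc * ss * (n:ℝ)^2 +
      (-2:ℝ) * aa * bb * cc * dd * ee * ss^3 +
      (2:ℝ) * aa * bb^2 * dd * gg * ss^3 +
      (1:ℝ) * aa * bb^2 * dd^2 * ss^2 +
      (2:ℝ) * aa * bb^2 * cc * hh * ss^3 +
      (-2:ℝ) * aa * bb^2 * cc * dd * ss^2 +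
      (-2:ℝ) * aa * bb^3 * dd * ss * (n:ℝ)^2 +
      (1:ℝ) * aa * bb^4 * (n:ℝ)^2 +
      (-2:ℝ) * aa^2 * dd^2 * ee * ss^3 +
      (2:ℝ) * aa^2 * bb * ee * gg * ss^3 +
      (2:ℝ) * aa^2 * bb * dd * hh * ss^3 +
      (2:ℝ) * aa^2 * bb * dd * ee * ss^2 +
      (-1:ℝ) * aa^2 * bb * dd^2 * ss^2 +
      (-2:ℝ) * aa^2 * bb^2 * kk * ss^3 +
      (-2:ℝ) * aa^2 * bb^2 * hh * ss^2 +
      (2:ℝ) * aa^2 * bb^2 * gg * ss^2 +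
      (1:ℝ) * aa^2 * bb^3 * (n:ℝ)^2 +
      (-2:ℝ) * aa^3 * bb * dd * ss * (m:ℝ)^2 +
      (-1:ℝ) * aa^3 * bb^2 * (m:ℝ)^2 +
      (8:ℝ) * aa^3 * bb^3 * dd * ss^3 * δ^2 +
      (4:ℝ) * aa^3 * bb^4 * ss^2 * δ^2 +
      (2:ℝ) * aa^4 * ee * ss * (m:ℝ)^2 +
      (-1:ℝ) * aa^4 * bb * (m:ℝ)^2 +
      (-4:ℝ) * aa^4 * bb^3 * ss^2 * δ^2) / (2 * ss ^ 3 * aa ^ 2 * bb ^ 2) := by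
    field_simp
    ring
  rw [hfin, hBIG, zero_div]
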